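/- In Z_91, let H₂ = {1,9,81}, and for a subset S of Z_91 let H₂S = {h·s mod 91 : h ∈ H₂, s ∈ S}. Then the pair X = H₂{2,5,14,16,19,20,23,24,29,30,37,40,46,48,49}, Y = H₂{2,4,6,8,13,14,16,23,30,37,38,39,40,46,49} is a difference family in Z_91 with parameters (91; 45, 45; 44). -/

import Mathlib

open Finset

/-- The number of ordered pairs `(a,b) ∈ X × X` with `a - b = s`. -/
def diffCount (X : Finset (ZMod 91)) (s : ZMod 91) : ℕ :=
  ((X ×ˢ X).filter (fun p => p.1 - p.2 = s)).card

def H : Finset (ZMod 91) := {1, 9, 81}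

def X : Finset (ZMod 91) := (H ×ˢ ({2, 5, 14, 16, 19, 20, 23, 24, 29, 30, 37, 40, 46, 48, 49} : Finset (ZMod 91))).image (fun p => p.1 * p.2)

def Y : Finset (ZMod 91) := (H ×ˢ ({2, 4, 6, 8, 13, 14, 16, 23, 30, 37, 38, 39, 40, 46, 49} : Finset (ZMod 91))).image (fun p => p.1 * p.2)

def X' : Finset (ZMod 91) := {2, 5, 14, 16, 18, 19, 20, 22, 23, 24, 25, 29, 30, 33, 34, 35, 37, 40, 41, 42, 43, 45, 46, 48, 49, 50, 53, 55, 56, 60, 64, 66, 68, 71, 73, 74, 77, 79, 80, 83, 85, 86, 87, 88, 89}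

def Y' : Finset (ZMod 91) := {2, 4, 6, 8, 11, 13, 14, 16, 18, 22, 23, 25, 26, 30, 31, 35, 36, 37, 38, 39, 40, 42, 43, 46, 49, 50, 51, 52, 53, 54, 55, 56, 60, 64, 65, 69, 71, 72, 75, 77, 78, 85, 86, 87, 88}

def DX1 : List ℕ := [0, 88, 79, 77, 75, 74, 73, 71, 70, 69, 68, 64, 63, 60, 59, 58, 56, 53, 52, 51, 50, 48, 47, 45, 44, 43, 40, 38, 37, 33, 29, 27, 25, 22, 20, 19, 16, 14, 13, 10, 8, 7, 6, 5, 4, 3, 0, 82, 80, 78, 77, 76, 74, 73, 72, 71, 67, 66, 63, 62, 61, 59, 56, 55, 54, 53, 51, 50, 48, 47, 46, 43, 41, 40, 36, 32, 30, 28, 25, 23, 22, 19, 17, 16, 13, 11, 10, 9, 8, 7, 12, 9, 0, 89, 87, 86, 85, 83, 82, 81, 80, 76, 75, 72, 71, 70, 68, 65, 64, 63, 62, 60, 59, 57, 56, 55, 52, 50, 49, 45, 41, 39, 37, 34, 32, 31, 28, 26, 25, 22, 20, 19, 18, 17, 16, 14, 11, 2, 0, 89, 88, 87, 85, 84, 83,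 82, 78, 77, 74, 73, 72, 70, 67, 66, 65, 64, 62, 61, 59, 58, 57, 54, 52, 51, 47, 43, 41, 39, 36, 34, 33, 30, 28, 27, 24, 22, 21, 20, 19, 18, 16, 13, 4, 2, 0, 90, 89, 87, 86, 85, 84, 80, 79, 76, 75, 74, 72, 69, 68, 67, 66, 64, 63, 61, 60, 59, 56, 54, 53, 49, 45, 43, 41, 38, 36, 35, 32, 30, 29, 26, 24, 23, 22, 21, 20]

def DX2 : List ℕ := [17, 14, 5, 3, 1, 0, 90, 88, 87, 86, 85, 81, 80, 77, 76, 75, 73, 70, 69, 68, 67, 65, 64, 62, 61, 60, 57, 55, 54, 50, 46, 44, 42, 39, 37, 36, 33, 31, 30, 27, 25, 24, 23, 22, 21, 18, 15, 6, 4, 2, 1, 0, 89, 88, 87, 86, 82, 81, 78, 77, 76, 74, 71, 70, 69, 68, 66, 65, 63, 62, 61, 58, 56, 55, 51, 47, 45, 43, 40, 38, 37, 34, 32, 31, 28, 26, 25, 24, 23, 22, 20, 17, 8, 6, 4, 3, 2, 0, 90, 89, 88, 84, 83, 80, 79, 78, 76, 73, 72, 71, 70, 68, 67, 65, 64, 63,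 60, 58, 57, 53, 49, 47, 45, 42, 40, 39, 36, 34, 33, 30, 28, 27, 26, 25, 24, 21, 18, 9, 7, 5, 4, 3, 1, 0, 90, 89, 85, 84, 81, 80, 79, 77, 74, 73, 72, 71, 69, 68, 66, 65, 64, 61, 59, 58, 54, 50, 48, 46, 43, 41, 40, 37, 35, 34, 31, 29, 28, 27, 26, 25, 22, 19, 10, 8, 6, 5, 4, 2, 1, 0, 90, 86, 85, 82, 81, 80, 78, 75, 74, 73, 72, 70, 69, 67, 66, 65, 62, 60, 59, 55, 51, 49, 47, 44, 42, 41, 38, 36, 35, 32, 30, 29, 28, 27, 26]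

def DX3 : List ℕ := [23, 20, 11, 9, 7, 6, 5, 3, 2, 1, 0, 87, 86, 83, 82, 81, 79, 76, 75, 74, 73, 71, 70, 68, 67, 66, 63, 61, 60, 56, 52, 50, 48, 45, 43, 42, 39, 37, 36, 33, 31, 30, 29, 28, 27, 27, 24, 15, 13, 11, 10, 9, 7, 6, 5, 4, 0, 90, 87, 86, 85, 83, 80, 79, 78, 77, 75, 74, 72, 71, 70, 67, 65, 64, 60, 56, 54, 52, 49, 47, 46, 43, 41, 40, 37, 35, 34, 33, 32, 31, 28, 25, 16, 14, 12, 11, 10, 8, 7, 6, 5, 1, 0, 88, 87, 86, 84, 81, 80, 79, 78, 76, 75, 73, 72, 71, 68, 66, 65, 61, 57, 55, 53, 50, 48, 47, 44, 42, 41, 38, 36, 35, 34, 33, 32, 31, 28, 19, 17, 15, 14, 13, 11, 10, 9, 8, 4, 3, 0, 90, 89, 87, 84, 83, 82, 81, 79, 78, 76, 75, 74, 71, 69, 68, 64, 60, 58, 56, 53, 51, 50, 47, 45, 44, 41, 39, 38, 37, 36, 35, 32, 29, 20, 18, 16, 15, 14, 12, 11, 10, 9, 5, 4, 1, 0, 90,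 88, 85, 84, 83, 82, 80, 79, 77, 76, 75, 72, 70, 69, 65, 61, 59, 57, 54, 52, 51, 48, 46, 45, 42, 40, 39, 38, 37, 36]

def DX4 : List ℕ := [33, 30, 21, 19, 17, 16, 15, 13, 12, 11, 10, 6, 5, 2, 1, 0, 89, 86, 85, 84, 83, 81, 80, 78, 77, 76, 73, 71, 70, 66, 62, 60, 58, 55, 53, 52, 49, 47, 46, 43, 41, 40, 39, 38, 37, 35, 32, 23, 21, 19, 18, 17, 15, 14, 13, 12, 8, 7, 4, 3, 2, 0, 88, 87, 86, 85, 83, 82, 80, 79, 78, 75, 73, 72, 68, 64, 62, 60, 57, 55, 54, 51, 49, 48, 45, 43, 42, 41, 40, 39, 38, 35, 26, 24, 22, 21, 20, 18, 17, 16, 15, 11, 10, 7, 6, 5, 3, 0, 90, 89, 88, 86, 85, 83, 82, 81, 78, 76, 75, 71, 67, 65, 63, 60, 58, 57, 54, 52, 51, 48, 46, 45, 44, 43, 42, 39, 36, 27, 25, 23, 22, 21, 19, 18, 17, 16, 12, 11, 8, 7, 6, 4, 1, 0, 90, 89, 87, 86, 84, 83, 82, 79, 77, 76, 72, 68, 66,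 64, 61, 59, 58, 55, 53, 52, 49, 47, 46, 45, 44, 43, 40, 37, 28, 26, 24, 23, 22, 20, 19, 18, 17, 13, 12, 9, 8, 7, 5, 2, 1, 0, 90, 88, 87, 85, 84, 83, 80, 78, 77, 73, 69, 67, 65, 62, 60, 59, 56, 54, 53, 50, 48, 47, 46, 45, 44]

def DX5 : List ℕ := [41, 38, 29, 27, 25, 24, 23, 21, 20, 19, 18, 14, 13, 10, 9, 8, 6, 3, 2, 1, 0, 89, 88, 86, 85, 84, 81, 79, 78, 74, 70, 68, 66, 63, 61, 60, 57, 55, 54, 51, 49, 48, 47, 46, 45, 43, 40, 31, 29, 27, 26, 25, 23, 22, 21, 20, 16, 15, 12, 11, 10, 8, 5, 4, 3, 2, 0, 90, 88, 87, 86, 83, 81, 80, 76, 72, 70, 68, 65, 63, 62, 59, 57, 56, 53, 51, 50, 49, 48, 47, 44, 41, 32, 30, 28, 27, 26, 24, 23, 22, 21, 17, 16, 13, 12, 11, 9, 6, 5, 4, 3, 1, 0, 89, 88, 87, 84, 82, 81, 77, 73, 71, 69, 66, 64, 63, 60, 58, 57, 54, 52, 51, 50, 49, 48, 46, 43, 34,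 32, 30, 29, 28, 26, 25, 24, 23, 19, 18, 15, 14, 13, 11, 8, 7, 6, 5, 3, 2, 0, 90, 89, 86, 84, 83, 79, 75, 73, 71, 68, 66, 65, 62, 60, 59, 56, 54, 53, 52, 51, 50, 47, 44, 35, 33, 31, 30, 29, 27, 26, 25, 24, 20, 19, 16, 15, 14, 12, 9, 8, 7, 6, 4, 3, 1, 0, 90, 87, 85, 84, 80, 76, 74, 72, 69, 67, 66, 63, 61, 60, 57, 55, 54, 53, 52, 51]

def DX6 : List ℕ := [48, 45, 36, 34, 32, 31, 30, 28, 27, 26, 25, 21, 20, 17, 16, 15, 13, 10, 9, 8, 7, 5, 4, 2, 1, 0, 88, 86, 85, 81, 77, 75, 73, 70, 68, 67, 64, 62, 61, 58, 56, 55, 54, 53, 52, 51, 48, 39, 37, 35, 34, 33, 31, 30, 29, 28, 24, 23, 20, 19, 18, 16, 13, 12, 11, 10, 8, 7, 5, 4, 3, 0, 89, 88, 84, 80, 78, 76, 73, 71, 70, 67, 65, 64, 61, 59, 58, 57, 56, 55, 53, 50, 41, 39, 37, 36, 35, 33, 32, 31, 30, 26, 25, 22, 21, 20, 18, 15, 14,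 13, 12, 10, 9, 7, 6, 5, 2, 0, 90, 86, 82, 80, 78, 75, 73, 72, 69, 67, 66, 63, 61, 60, 59, 58, 57, 54, 51, 42, 40, 38, 37, 36, 34, 33, 32, 31, 27, 26, 23, 22, 21, 19, 16, 15, 14, 13, 11, 10, 8, 7, 6, 3, 1, 0, 87, 83, 81, 79, 76, 74, 73, 70, 68, 67, 64, 62, 61, 60, 59, 58, 58, 55, 46, 44, 42, 41, 40, 38, 37, 36, 35, 31, 30, 27, 26, 25, 23, 20, 19, 18, 17, 15, 14, 12, 11, 10, 7, 5, 4, 0, 87, 85, 83, 80, 78, 77, 74, 72, 71, 68, 66, 65, 64, 63, 62]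

def DX7 : List ℕ := [62, 59, 50, 48, 46, 45, 44, 42, 41, 40, 39, 35, 34, 31, 30, 29, 27, 24, 23, 22, 21, 19, 18, 16, 15, 14, 11, 9, 8, 4, 0, 89, 87, 84, 82, 81, 78, 76, 75, 72, 70, 69, 68, 67, 66, 64, 61, 52, 50, 48, 47, 46, 44, 43, 42, 41, 37, 36, 33, 32, 31, 29, 26, 25, 24, 23, 21, 20, 18, 17, 16, 13, 11, 10, 6, 2, 0, 89, 86, 84, 83, 80, 78, 77, 74, 72, 71, 70, 69, 68, 66, 63, 54, 52, 50, 49, 48, 46, 45, 44, 43, 39, 38, 35, 34, 33, 31, 28, 27, 26, 25, 23, 22, 20, 19, 18, 15, 13, 12, 8, 4, 2, 0, 88, 86, 85, 82, 80, 79, 76, 74, 73, 72, 71, 70, 69, 66, 57, 55, 53, 52, 51, 49, 48, 47, 46, 42, 41, 38, 37, 36, 34, 31, 30, 29, 28, 26, 25, 23, 22, 21, 18, 16, 15, 11, 7, 5, 3, 0, 89, 88, 85, 83, 82, 79, 77, 76, 75, 74, 73, 71, 68, 59, 57, 55, 54, 53, 51, 50, 49, 48, 44, 43, 40, 39, 38,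 36, 33, 32, 31, 30, 28, 27, 25, 24, 23, 20, 18, 17, 13, 9, 7, 5, 2, 0, 90, 87, 85, 84, 81, 79, 78, 77, 76, 75]

def DX8 : List ℕ := [72, 69, 60, 58, 56, 55, 54, 52, 51, 50, 49, 45, 44, 41, 40, 39, 37, 34, 33, 32, 31, 29, 28, 26, 25, 24, 21, 19, 18, 14, 10, 8, 6, 3, 1, 0, 88, 86, 85, 82, 80, 79, 78, 77, 76, 75, 72, 63, 61, 59, 58, 57, 55, 54, 53, 52, 48, 47, 44, 43, 42, 40, 37, 36, 35, 34, 32, 31, 29, 28, 27, 24, 22, 21, 17, 13, 11, 9, 6, 4, 3, 0, 89, 88, 85, 83, 82, 81, 80, 79, 77, 74, 65, 63, 61, 60, 59, 57, 56, 55, 54, 50, 49, 46, 45, 44, 42, 39, 38, 37, 36, 34, 33, 31, 30, 29, 26, 24, 23, 19, 15, 13, 11, 8, 6, 5, 2, 0, 90, 87, 85, 84, 83, 82, 81, 78, 75, 66, 64, 62, 61, 60, 58, 57, 56, 55, 51, 50, 47, 46, 45, 43, 40, 39, 38, 37, 35, 34, 32, 31, 30, 27, 25, 24, 20, 16, 14,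 12, 9, 7, 6, 3, 1, 0, 88, 86, 85, 84, 83, 82, 81, 78, 69, 67, 65, 64, 63, 61, 60, 59, 58, 54, 53, 50, 49, 48, 46, 43, 42, 41, 40, 38, 37, 35, 34, 33, 30, 28, 27, 23, 19, 17, 15, 12, 10, 9, 6, 4, 3, 0, 89, 88, 87, 86, 85]

def DX9 : List ℕ := [83, 80, 71, 69, 67, 66, 65, 63, 62, 61, 60, 56, 55, 52, 51, 50, 48, 45, 44, 43, 42, 40, 39, 37, 36, 35, 32, 30, 29, 25, 21, 19, 17, 14, 12, 11, 8, 6, 5, 2, 0, 90, 89, 88, 87, 84, 81, 72, 70, 68, 67, 66, 64, 63, 62, 61, 57, 56, 53, 52, 51, 49, 46, 45, 44, 43, 41, 40, 38, 37, 36, 33, 31, 30, 26, 22, 20, 18, 15, 13, 12, 9, 7, 6, 3, 1, 0, 90, 89, 88, 85, 82, 73, 71, 69, 68, 67, 65, 64, 63, 62, 58, 57, 54, 53, 52, 50, 47, 46, 45, 44, 42, 41, 39, 38, 37, 34, 32, 31, 27, 23, 21, 19, 16, 14, 13, 10, 8, 7, 4, 2, 1, 0, 90, 89, 86, 83, 74,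 72, 70, 69, 68, 66, 65, 64, 63, 59, 58, 55, 54, 53, 51, 48, 47, 46, 45, 43, 42, 40, 39, 38, 35, 33, 32, 28, 24, 22, 20, 17, 15, 14, 11, 9, 8, 5, 3, 2, 1, 0, 90, 87, 84, 75, 73, 71, 70, 69, 67, 66, 65, 64, 60, 59, 56, 55, 54, 52, 49, 48, 47, 46, 44, 43, 41, 40, 39, 36, 34, 33, 29, 25, 23, 21, 18, 16, 15, 12, 10, 9, 6, 4, 3, 2, 1, 0]

def DXn : List ℕ := DX1 ++ DX2 ++ DX3 ++ DX4 ++ DX5 ++ DX6 ++ DX7 ++ DX8 ++ DX9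

def DY1 : List ℕ := [0, 89, 87, 85, 82, 80, 79, 77, 75, 71, 70, 68, 67, 63, 62, 58, 57, 56, 55, 54, 53, 51, 50, 47, 44, 43, 42, 41, 40, 39, 38, 37, 33, 29, 28, 24, 22, 21, 18, 16, 15, 8, 7, 6, 5, 2, 0, 89, 87, 84, 82, 81, 79, 77, 73, 72, 70, 69, 65, 64, 60, 59, 58, 57, 56, 55, 53, 52, 49, 46, 45, 44, 43, 42, 41, 40, 39, 35, 31, 30, 26, 24, 23, 20, 18, 17, 10, 9, 8, 7, 4, 2, 0, 89, 86, 84, 83, 81, 79, 75, 74, 72, 71, 67, 66, 62, 61, 60, 59, 58, 57, 55, 54, 51, 48, 47, 46, 45, 44, 43, 42, 41, 37, 33, 32, 28, 26, 25, 22, 20, 19, 12, 11, 10, 9, 6, 4, 2, 0, 88, 86, 85, 83, 81, 77, 76, 74, 73, 69, 68, 64, 63, 62, 61, 60, 59, 57, 56, 53, 50, 49, 48, 47, 46, 45, 44, 43, 39, 35, 34, 30, 28, 27, 24, 22, 21, 14, 13, 12, 11, 9, 7, 5, 3, 0, 89, 88, 86, 84, 80, 79, 77, 76, 72, 71, 67,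 66, 65, 64, 63, 62, 60, 59, 56, 53, 52, 51, 50, 49, 48, 47, 46, 42, 38, 37, 33, 31, 30, 27, 25, 24, 17, 16, 15, 14]

def DY2 : List ℕ := [11, 9, 7, 5, 2, 0, 90, 88, 86, 82, 81, 79, 78, 74, 73, 69, 68, 67, 66, 65, 64, 62, 61, 58, 55, 54, 53, 52, 51, 50, 49, 48, 44, 40, 39, 35, 33, 32, 29, 27, 26, 19, 18, 17, 16, 12, 10, 8, 6, 3, 1, 0, 89, 87, 83, 82, 80, 79, 75, 74, 70, 69, 68, 67, 66, 65, 63, 62, 59, 56, 55, 54, 53, 52, 51, 50, 49, 45, 41, 40, 36, 34, 33, 30, 28, 27, 20, 19, 18, 17, 14, 12, 10, 8, 5, 3, 2, 0, 89, 85, 84, 82, 81, 77, 76, 72, 71, 70, 69, 68, 67, 65, 64, 61, 58, 57, 56, 55, 54, 53, 52, 51, 47, 43, 42, 38, 36, 35, 32, 30, 29, 22, 21, 20, 19, 16, 14, 12, 10, 7, 5, 4, 2, 0, 87, 86, 84, 83, 79, 78, 74, 73, 72, 71, 70, 69, 67, 66, 63, 60, 59, 58, 57, 56, 55, 54, 53,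 49, 45, 44, 40, 38, 37, 34, 32, 31, 24, 23, 22, 21, 20, 18, 16, 14, 11, 9, 8, 6, 4, 0, 90, 88, 87, 83, 82, 78, 77, 76, 75, 74, 73, 71, 70, 67, 64, 63, 62, 61, 60, 59, 58, 57, 53, 49, 48, 44, 42, 41, 38, 36, 35, 28, 27, 26, 25]

def DY3 : List ℕ := [21, 19, 17, 15, 12, 10, 9, 7, 5, 1, 0, 89, 88, 84, 83, 79, 78, 77, 76, 75, 74, 72, 71, 68, 65, 64, 63, 62, 61, 60, 59, 58, 54, 50, 49, 45, 43, 42, 39, 37, 36, 29, 28, 27, 26, 23, 21, 19, 17, 14, 12, 11, 9, 7, 3, 2, 0, 90, 86, 85, 81, 80, 79, 78, 77, 76, 74, 73, 70, 67, 66, 65, 64, 63, 62, 61, 60, 56, 52, 51, 47, 45, 44, 41, 39, 38, 31, 30, 29, 28, 24, 22, 20, 18, 15, 13, 12, 10, 8, 4, 3, 1, 0, 87, 86, 82, 81, 80, 79, 78, 77, 75, 74, 71, 68, 67, 66, 65, 64, 63, 62, 61, 57, 53, 52, 48, 46, 45, 42, 40, 39, 32, 31, 30, 29, 28, 26, 24,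 22, 19, 17, 16, 14, 12, 8, 7, 5, 4, 0, 90, 86, 85, 84, 83, 82, 81, 79, 78, 75, 72, 71, 70, 69, 68, 67, 66, 65, 61, 57, 56, 52, 50, 49, 46, 44, 43, 36, 35, 34, 33, 29, 27, 25, 23, 20, 18, 17, 15, 13, 9, 8, 6, 5, 1, 0, 87, 86, 85, 84, 83, 82, 80, 79, 76, 73, 72, 71, 70, 69, 68, 67, 66, 62, 58, 57, 53, 51, 50, 47, 45, 44, 37, 36, 35, 34]

def DY4 : List ℕ := [33, 31, 29, 27, 24, 22, 21, 19, 17, 13, 12, 10, 9, 5, 4, 0, 90, 89, 88, 87, 86, 84, 83, 80, 77, 76, 75, 74, 73, 72, 71, 70, 66, 62, 61, 57, 55, 54, 51, 49, 48, 41, 40, 39, 38, 34, 32, 30, 28, 25, 23, 22, 20, 18, 14, 13, 11, 10, 6, 5, 1, 0, 90, 89, 88, 87, 85, 84, 81, 78, 77, 76, 75, 74, 73, 72, 71, 67, 63, 62, 58, 56, 55, 52, 50, 49, 42, 41, 40, 39, 35, 33, 31, 29, 26, 24, 23, 21, 19, 15, 14, 12, 11, 7, 6, 2, 1, 0, 90,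 89, 88, 86, 85, 82, 79, 78, 77, 76, 75, 74, 73, 72, 68, 64, 63, 59, 57, 56, 53, 51, 50, 43, 42, 41, 40, 36, 34, 32, 30, 27, 25, 24, 22, 20, 16, 15, 13, 12, 8, 7, 3, 2, 1, 0, 90, 89, 87, 86, 83, 80, 79, 78, 77, 76, 75, 74, 73, 69, 65, 64, 60, 58, 57, 54, 52, 51, 44, 43, 42, 41, 37, 35, 33, 31, 28, 26, 25, 23, 21, 17, 16, 14, 13, 9, 8, 4, 3, 2, 1, 0, 90, 88, 87, 84, 81, 80, 79, 78, 77, 76, 75, 74, 70, 66, 65, 61, 59, 58, 55, 53, 52, 45, 44, 43, 42]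

def DY5 : List ℕ := [38, 36, 34, 32, 29, 27, 26, 24, 22, 18, 17, 15, 14, 10, 9, 5, 4, 3, 2, 1, 0, 89, 88, 85, 82, 81, 80, 79, 78, 77, 76, 75, 71, 67, 66, 62, 60, 59, 56, 54, 53, 46, 45, 44, 43, 40, 38, 36, 34, 31, 29, 28, 26, 24, 20, 19, 17, 16, 12, 11, 7, 6, 5, 4, 3, 2, 0, 90, 87, 84, 83, 82, 81, 80, 79, 78, 77, 73, 69, 68, 64, 62, 61, 58, 56, 55, 48, 47, 46, 45, 41, 39, 37, 35, 32, 30, 29, 27, 25, 21, 20, 18, 17, 13, 12, 8, 7, 6, 5, 4, 3, 1, 0, 88, 85, 84, 83, 82, 81, 80, 79, 78, 74, 70, 69, 65, 63, 62, 59, 57, 56, 49, 48, 47, 46, 44, 42, 40, 38, 35, 33, 32, 30, 28, 24, 23, 21, 20, 16, 15, 11, 10, 9, 8, 7, 6, 4, 3, 0, 88, 87, 86, 85, 84, 83, 82, 81, 77, 73, 72, 68, 66, 65, 62, 60, 59, 52, 51, 50, 49, 47, 45, 43, 41, 38, 36, 35, 33, 31, 27, 26, 24, 23, 19, 18, 14,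 13, 12, 11, 10, 9, 7, 6, 3, 0, 90, 89, 88, 87, 86, 85, 84, 80, 76, 75, 71, 69, 68, 65, 63, 62, 55, 54, 53, 52]

def DY6 : List ℕ := [48, 46, 44, 42, 39, 37, 36, 34, 32, 28, 27, 25, 24, 20, 19, 15, 14, 13, 12, 11, 10, 8, 7, 4, 1, 0, 90, 89, 88, 87, 86, 85, 81, 77, 76, 72, 70, 69, 66, 64, 63, 56, 55, 54, 53, 49, 47, 45, 43, 40, 38, 37, 35, 33, 29, 28, 26, 25, 21, 20, 16, 15, 14, 13, 12, 11, 9, 8, 5, 2, 1, 0, 90, 89, 88, 87, 86, 82, 78, 77, 73, 71, 70, 67, 65, 64, 57, 56, 55, 54, 50, 48, 46, 44, 41, 39, 38, 36, 34, 30, 29, 27, 26, 22, 21, 17, 16, 15, 14, 13, 12, 10, 9, 6, 3, 2, 1, 0, 90, 89, 88, 87, 83, 79, 78, 74, 72, 71, 68, 66, 65, 58, 57, 56, 55, 51, 49, 47, 45, 42, 40, 39, 37, 35, 31, 30, 28, 27, 23, 22, 18, 17, 16, 15, 14, 13, 11, 10, 7, 4, 3, 2, 1, 0, 90, 89, 88,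 84, 80, 79, 75, 73, 72, 69, 67, 66, 59, 58, 57, 56, 52, 50, 48, 46, 43, 41, 40, 38, 36, 32, 31, 29, 28, 24, 23, 19, 18, 17, 16, 15, 14, 12, 11, 8, 5, 4, 3, 2, 1, 0, 90, 89, 85, 81, 80, 76, 74, 73, 70, 68, 67, 60, 59, 58, 57]

def DY7 : List ℕ := [53, 51, 49, 47, 44, 42, 41, 39, 37, 33, 32, 30, 29, 25, 24, 20, 19, 18, 17, 16, 15, 13, 12, 9, 6, 5, 4, 3, 2, 1, 0, 90, 86, 82, 81, 77, 75, 74, 71, 69, 68, 61, 60, 59, 58, 54, 52, 50, 48, 45, 43, 42, 40, 38, 34, 33, 31, 30, 26, 25, 21, 20, 19, 18, 17, 16, 14, 13, 10, 7, 6, 5, 4, 3, 2, 1, 0, 87, 83, 82, 78, 76, 75, 72, 70, 69, 62, 61, 60, 59, 58, 56, 54, 52, 49, 47, 46, 44, 42, 38, 37, 35, 34, 30, 29, 25, 24, 23, 22, 21, 20, 18, 17, 14, 11, 10, 9, 8, 7, 6, 5, 4, 0, 87, 86, 82, 80, 79, 76, 74, 73, 66, 65, 64, 63, 62, 60, 58,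 56, 53, 51, 50, 48, 46, 42, 41, 39, 38, 34, 33, 29, 28, 27, 26, 25, 24, 22, 21, 18, 15, 14, 13, 12, 11, 10, 9, 8, 4, 0, 90, 86, 84, 83, 80, 78, 77, 70, 69, 68, 67, 63, 61, 59, 57, 54, 52, 51, 49, 47, 43, 42, 40, 39, 35, 34, 30, 29, 28, 27, 26, 25, 23, 22, 19, 16, 15, 14, 13, 12, 11, 10, 9, 5, 1, 0, 87, 85, 84, 81, 79, 78, 71, 70, 69, 68]

def DY8 : List ℕ := [67, 65, 63, 61, 58, 56, 55, 53, 51, 47, 46, 44, 43, 39, 38, 34, 33, 32, 31, 30, 29, 27, 26, 23, 20, 19, 18, 17, 16, 15, 14, 13, 9, 5, 4, 0, 89, 88, 85, 83, 82, 75, 74, 73, 72, 69, 67, 65, 63, 60, 58, 57, 55, 53, 49, 48, 46, 45, 41, 40, 36, 35, 34, 33, 32, 31, 29, 28, 25, 22, 21, 20, 19, 18, 17, 16, 15, 11, 7, 6, 2, 0, 90, 87, 85, 84, 77, 76, 75, 74, 70, 68, 66, 64, 61, 59, 58, 56, 54, 50, 49, 47, 46, 42, 41, 37, 36, 35, 34,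 33, 32, 30, 29, 26, 23, 22, 21, 20, 19, 18, 17, 16, 12, 8, 7, 3, 1, 0, 88, 86, 85, 78, 77, 76, 75, 73, 71, 69, 67, 64, 62, 61, 59, 57, 53, 52, 50, 49, 45, 44, 40, 39, 38, 37, 36, 35, 33, 32, 29, 26, 25, 24, 23, 22, 21, 20, 19, 15, 11, 10, 6, 4, 3, 0, 89, 88, 81, 80, 79, 78, 75, 73, 71, 69, 66, 64, 63, 61, 59, 55, 54, 52, 51, 47, 46, 42, 41, 40, 39, 38, 37, 35, 34, 31, 28, 27, 26, 25, 24, 23, 22, 21, 17, 13, 12, 8, 6, 5, 2, 0, 90, 83, 82, 81, 80]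

def DY9 : List ℕ := [76, 74, 72, 70, 67, 65, 64, 62, 60, 56, 55, 53, 52, 48, 47, 43, 42, 41, 40, 39, 38, 36, 35, 32, 29, 28, 27, 26, 25, 24, 23, 22, 18, 14, 13, 9, 7, 6, 3, 1, 0, 84, 83, 82, 81, 83, 81, 79, 77, 74, 72, 71, 69, 67, 63, 62, 60, 59, 55, 54, 50, 49, 48, 47, 46, 45, 43, 42, 39, 36, 35, 34, 33, 32, 31, 30, 29, 25, 21, 20, 16, 14, 13, 10, 8, 7, 0, 90, 89, 88, 84, 82, 80, 78, 75, 73, 72, 70, 68, 64, 63, 61, 60, 56, 55, 51, 50, 49, 48, 47, 46, 44, 43, 40, 37, 36, 35, 34, 33, 32, 31, 30, 26, 22, 21, 17, 15, 14, 11, 9, 8, 1, 0, 90, 89, 85, 83, 81, 79, 76, 74, 73, 71, 69, 65, 64, 62, 61, 57, 56, 52, 51, 50, 49, 48, 47, 45, 44, 41, 38, 37, 36, 35, 34, 33, 32, 31, 27, 23, 22, 18, 16, 15, 12, 10, 9, 2, 1, 0, 90, 86, 84, 82, 80, 77, 75, 74, 72, 70, 66, 65, 63, 62, 58, 57, 53,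 52, 51, 50, 49, 48, 46, 45, 42, 39, 38, 37, 36, 35, 34, 33, 32, 28, 24, 23, 19, 17, 16, 13, 11, 10, 3, 2, 1, 0]

def DYn : List ℕ := DY1 ++ DY2 ++ DY3 ++ DY4 ++ DY5 ++ DY6 ++ DY7 ++ DY8 ++ DY9

def NX : ℕ := 336798201799160182694970910444076682331914382747792503058351608567736732767575125897451803353472569366665671701657408672324901173178152058441061318656902805469900208477301226841216597915308552037798399808566024594576556496320702326287690518775415622865424738754644682972270084253260469183943400554075538159107788103459960391959004226231320240863634956333

def NY : ℕ := 368870118557762832914847254478992159360830408988181427050223179552150306529360685018764989190708314194940388329125805636148917837900392994263134060750086929265001321973153500682717435344897122068457710818051924136789362379836924907716830000133909280885490831558621977627866545025242565736368755549421184720641664481042416096217234449360885671750208249901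

set_option maxRecDepth 1000000 in
set_option maxHeartbeats 4000000 in
lemma hX : X = X' := by decide +kernel

set_option maxRecDepth 1000000 in
set_option maxHeartbeats 4000000 in
lemma hY : Y = Y' := by decide +kernel

set_option maxRecDepth 1000000 in
set_option maxHeartbeats 4000000 in
lemma hDX : (X' ×ˢ X').val.map (fun p => p.1 - p.2) = ((DXn.map (Nat.cast : ℕ → ZMod 91) : List (ZMod 91)) : Multiset (ZMod 91)) := by decide +kernel

set_option maxRecDepth 1000000 in
set_option maxHeartbeats 4000000 in
lemma hDY : (Y' ×ˢ Y').val.map (fun p => p.1 - p.2) = ((DYn.map (Nat.cast : ℕ → ZMod 91) : List (ZMod 91)) : Multiset (ZMod 91)) := by decide +kernel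

set_option maxRecDepth 1000000 in
set_option maxHeartbeats 4000000 in
lemma hltDX1 : ∀ d ∈ DX1, d < 91 := by decide +kernel

set_option maxRecDepth 1000000 in
set_option maxHeartbeats 4000000 in
lemma hfoldDX1 : DX1.foldr (fun d a => a + 8192 ^ d) 0 = 16041831639720538875320850152410746941435121302962591188176720609812911167476158144592673293811872380570504690656028987606779692313305683255915329820292238164642335939562774614581589508682583931231148319359636705810888647480531366824945963017752975881854450029988206284079435155662874363405344703077844824273393185769846610955242198138861111107628564485 := by decide +kernel

set_option maxRecDepth 1000000 in
set_option maxHeartbeats 4000000 in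
lemma hlenDX1 : DX1.length = 225 := by decide +kernel

set_option maxRecDepth 1000000 in
set_option maxHeartbeats 4000000 in
lemma hltDX2 : ∀ d ∈ DX2, d < 91 := by decide +kernel

set_option maxRecDepth 1000000 in
set_option maxHeartbeats 4000000 in
lemma hfoldDX2 : DX2.foldr (fun d a => a + 8192 ^ d) 0 = 64149707733500484005179830628706404284488012329806655669561450453149013074087298181739239888460894662588646669291588701494650448755842527177867485499298284066946226414929978247219521265669630392316087076345695000768850459742855338447766748908939745370858516830061190945370282770870362348828937242980883561151251254137200486339675930976339840845874233349 := by decide +kernel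

set_option maxRecDepth 1000000 in
set_option maxHeartbeats 4000000 in
lemma hlenDX2 : DX2.length = 225 := by decide +kernel

set_option maxRecDepth 1000000 in
set_option maxHeartbeats 4000000 in
lemma hltDX3 : ∀ d ∈ DX3, d < 91 := by decide +kernel

set_option maxRecDepth 1000000 in
set_option maxHeartbeats 4000000 in
lemma hfoldDX3 : DX3.foldr (fun d a => a + 8192 ^ d) 0 = 48109833847359973821293413341841579574498871564281683604796981674166149635156798647242992633247093328588124334764300356830657609144811140444250846243680718237637288295264301777897112543749999449133681744459178254625721560763694738424950649850610271871996238652720176989740047617180750845395094625666161342497980557675038932540829902773339801184196648965 := by decide +kernel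

set_option maxRecDepth 1000000 in
set_option maxHeartbeats 4000000 in
lemma hlenDX3 : DX3.length = 225 := by decide +kernel

set_option maxRecDepth 1000000 in
set_option maxHeartbeats 4000000 in
lemma hltDX4 : ∀ d ∈ DX4, d < 91 := by decide +kernel

set_option maxRecDepth 1000000 in
set_option maxHeartbeats 4000000 in
lemma hfoldDX4 : DX4.foldr (fun d a => a + 8192 ^ d) 0 = 48113749115244754625438535505499009341049170380075915940511194685437486690573422099680477018572050022932543668459746300376375767965996947076737634542173651934840222271802608269726513409959066688680621187868125166633402065122371545669602229742688047372104003767270488588686301717337860776587294470918747485507442903321855907259669500700193000335400263685 := by decide +kernel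

set_option maxRecDepth 1000000 in
set_option maxHeartbeats 4000000 in
lemma hlenDX4 : DX4.length = 225 := by decide +kernel

set_option maxRecDepth 1000000 in
set_option maxHeartbeats 4000000 in
lemma hltDX5 : ∀ d ∈ DX5, d < 91 := by decide +kernel

set_option maxRecDepth 1000000 in
set_option maxHeartbeats 4000000 in
lemma hfoldDX5 : DX5.foldr (fun d a => a + 8192 ^ d) 0 = 48113749115244751063871181494789455170921625697016128363184593988143258612145144624405750423832523055486836118633707309431652848494665559636671513948959799064147097128122335724859187447901372925174483955680565100398200551512719782933729192413984949856521080898029157396770819306416161376029439521485093661428288946073790458273416946621441161340198608901 := by decide +kernel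

set_option maxRecDepth 1000000 in
set_option maxHeartbeats 4000000 in
lemma hlenDX5 : DX5.length = 225 := by decide +kernel

set_option maxRecDepth 1000000 in
set_option maxHeartbeats 4000000 in
lemma hltDX6 : ∀ d ∈ DX6, d < 91 := by decide +kernel

set_option maxRecDepth 1000000 in
set_option maxHeartbeats 4000000 in
lemma hfoldDX6 : DX6.foldr (fun d a => a + 8192 ^ d) 0 = 16037916610731827423637571400421385092333287547286870290044277565660273820791879450923397635763410946511990457538505526212001924652041591124650378293620494509557501570774974733395137082043670411135049027452095821187423983154269319541131988622791675331236891031366206279834589903978887305583640361307701414324147270601211560114462882603167608357970264069 := by decide +kernel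

set_option maxRecDepth 1000000 in
set_option maxHeartbeats 4000000 in
lemma hlenDX6 : DX6.length = 225 := by decide +kernel

set_option maxRecDepth 1000000 in
set_option maxHeartbeats 4000000 in
lemma hltDX7 : ∀ d ∈ DX7, d < 91 := by decide +kernel

set_option maxRecDepth 1000000 in
set_option maxHeartbeats 4000000 in
lemma hfoldDX7 : DX7.foldr (fun d a => a + 8192 ^ d) 0 = 16041831639691369636518543119989380981479484368308038849526924353725417596246874891077973365679479564949851433887772385261370808599609081233132108079371077868800103208019332055039608497159478293657379499258375935320382859000934762782301339210766004678668073332320501624093909791058797513206909834118871500198961878392042350116146163498842984025404997637 := by decide +kernel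

set_option maxRecDepth 1000000 in
set_option maxHeartbeats 4000000 in
lemma hlenDX7 : DX7.length = 225 := by decide +kernel

set_option maxRecDepth 1000000 in
set_option maxHeartbeats 4000000 in
lemma hltDX8 : ∀ d ∈ DX8, d < 91 := by decide +kernel

set_option maxRecDepth 1000000 in
set_option maxHeartbeats 4000000 in
lemma hfoldDX8 : DX8.foldr (fun d a => a + 8192 ^ d) 0 = 16039874603120410629730522331398461847188063906563172954933482178553120287987913611530299547981265921325407592165489924394064912297581992972785826874850574131071928772437875908044356753996827707413674311785640562186679893964994345994975695965073275998413637896773974182805964121497354852144542974231953356772185580367633235618103946778020495438106345477 := by decide +kernel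

set_option maxRecDepth 1000000 in
set_option maxHeartbeats 4000000 in
lemma hlenDX8 : DX8.length = 225 := by decide +kernel

set_option maxRecDepth 1000000 in
set_option maxHeartbeats 4000000 in
lemma hltDX9 : ∀ d ∈ DX9, d < 91 := by decide +kernel

set_option maxRecDepth 1000000 in
set_option maxHeartbeats 4000000 in
lemma hfoldDX9 : DX9.foldr (fun d a => a + 8192 ^ d) 0 = 64149707494546072613980462469020259098520745651491446197615983059089101883109636246258999546123979483711766736260269180717347160954297535519050195354655967492257504876387045510453571406145922239056274686356712047645006475578331125668286711042808676503771846316114780680888733869257419802762196820288281012954136527121340850741456754141114238228855029765 := by decide +kernel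

set_option maxRecDepth 1000000 in
set_option maxHeartbeats 4000000 in
lemma hlenDX9 : DX9.length = 225 := by decide +kernel

set_option maxRecDepth 1000000 in
set_option maxHeartbeats 4000000 in
lemma hltDY1 : ∀ d ∈ DY1, d < 91 := by decide +kernel

set_option maxRecDepth 1000000 in
set_option maxHeartbeats 4000000 in
lemma hfoldDY1 : DY1.foldr (fun d a => a + 8192 ^ d) 0 = 7830535886242123328628799386376236645588893920598412786153095884420722266835398174920444843407259422684677266960914651729030895507005142441073797962480539171514360602373673839587525315073502064890400556931423696005630704089701969383667738673462228535864293379877799417837303579571012594622324057706183273531239846062702025636395416451185470024450053 := by decide +kernel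

set_option maxRecDepth 1000000 in
set_option maxHeartbeats 4000000 in
lemma hlenDY1 : DY1.length = 225 := by decide +kernel

set_option maxRecDepth 1000000 in
set_option maxHeartbeats 4000000 in
lemma hltDY2 : ∀ d ∈ DY2, d < 91 := by decide +kernel

set_option maxRecDepth 1000000 in
set_option maxHeartbeats 4000000 in
lemma hfoldDY2 : DY2.foldr (fun d a => a + 8192 ^ d) 0 = 32075832743525669947904893882825254299419098265956034362142651684728083489618347821640226428247780264516252361143257532028971453200170932103884028502589195123317271767002629669141485568463017710922918043083155510749081757133303874709567016804547723059442367100923476780312429871087376273608730604126301237673883803157267802520898306041134680096794222597 := by decide +kernel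

set_option maxRecDepth 1000000 in
set_option maxHeartbeats 4000000 in
lemma hlenDY2 : DY2.length = 225 := by decide +kernel

set_option maxRecDepth 1000000 in
set_option maxHeartbeats 4000000 in
lemma hltDY3 : ∀ d ∈ DY3, d < 91 := by decide +kernel

set_option maxRecDepth 1000000 in
set_option maxHeartbeats 4000000 in
lemma hfoldDY3 : DY3.foldr (fun d a => a + 8192 ^ d) 0 = 32073874990062332456211119729713233559569324108694949331275436945638231067525444557551798516429383122671722321790679192923050252868084868952912302895741286918390619836522145217898565860108762822092574749712430325996962860501737515908820942089576281488683056828235100212554312206998613533001913895496493858631737346320431597442324606205870031148907782149 := by decide +kernel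

set_option maxRecDepth 1000000 in
set_option maxHeartbeats 4000000 in
lemma hlenDY3 : DY3.length = 225 := by decide +kernel

set_option maxRecDepth 1000000 in
set_option maxHeartbeats 4000000 in
lemma hltDY4 : ∀ d ∈ DY4, d < 91 := by decide +kernel

set_option maxRecDepth 1000000 in
set_option maxHeartbeats 4000000 in
lemma hfoldDY4 : DY4.foldr (fun d a => a + 8192 ^ d) 0 = 80187624105277900037183378327191305777090725718829658286813310465990645441945439353552163197109537154586720813599357449895068974620749642957430299694245881838302367696527819382276225209599552840346968552740528549723421123301709564888486536147633958454245932635048927145312143699898941878035633795007405980145796442159282083624556542466731760817258135557 := by decide +kernel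

set_option maxRecDepth 1000000 in
set_option maxHeartbeats 4000000 in
lemma hlenDY4 : DY4.length = 225 := by decide +kernel

set_option maxRecDepth 1000000 in
set_option maxHeartbeats 4000000 in
lemma hltDY5 : ∀ d ∈ DY5, d < 91 := by decide +kernel

set_option maxRecDepth 1000000 in
set_option maxHeartbeats 4000000 in
lemma hfoldDY5 : DY5.foldr (fun d a => a + 8192 ^ d) 0 = 32075833221434478487076696838038322822350745773754845521669140068331391642477754213773744903710198169083345292398489104952765839161673053714048396142671984389850554928124193186998767301434225906084306027858024957604979910531574906058856519568421858176380648582445982613536994886605733908290052376727695804523009443058271295016190089937077580802650292229 := by decide +kernel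

set_option maxRecDepth 1000000 in
set_option maxHeartbeats 4000000 in
lemma hlenDY5 : DY5.length = 225 := by decide +kernel

set_option maxRecDepth 1000000 in
set_option maxHeartbeats 4000000 in
lemma hltDY6 : ∀ d ∈ DY6, d < 91 := by decide +kernel

set_option maxRecDepth 1000000 in
set_option maxHeartbeats 4000000 in
lemma hfoldDY6 : DY6.foldr (fun d a => a + 8192 ^ d) 0 = 80189581619728498343905921158061168493521782637395428432043939934494080284008303521202485912615876578730437231097062481432980126501839318920114072112494103296640080829348547183256174228183897834419937656317474763601554975025872390604527816747768594066987806720987636310861399444573396628431309337741879979257189361059865566669272258528550276997910142981 := by decide +kernel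

set_option maxRecDepth 1000000 in
set_option maxHeartbeats 4000000 in
lemma hlenDY6 : DY6.length = 225 := by decide +kernel

set_option maxRecDepth 1000000 in
set_option maxHeartbeats 4000000 in
lemma hltDY7 : ∀ d ∈ DY7, d < 91 := by decide +kernel

set_option maxRecDepth 1000000 in
set_option maxHeartbeats 4000000 in
lemma hfoldDY7 : DY7.foldr (fun d a => a + 8192 ^ d) 0 = 32071917236657322758289049544118527191604559689810548636441800617150131216716279351770071546040206549161736378497136053465294556646151757883715928411642750150593198837360955371965003205981587816659521507140469370584243416311400901142083188457204282474655120720264910551610032463365723703374536086435327790430560731300939361258729959544837856086103973893 := by decide +kernel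

set_option maxRecDepth 1000000 in
set_option maxHeartbeats 4000000 in
lemma hlenDY7 : DY7.length = 225 := by decide +kernel

set_option maxRecDepth 1000000 in
set_option maxHeartbeats 4000000 in
lemma hltDY8 : ∀ d ∈ DY8, d < 91 := by decide +kernel

set_option maxRecDepth 1000000 in
set_option maxHeartbeats 4000000 in
lemma hfoldDY8 : DY8.foldr (fun d a => a + 8192 ^ d) 0 = 32075832982421732179405200828391300017739963729868182322049056602640642843213324782509236336652032187798679688633150567315686471341676824765659371896784085531630585122397478849287963475346125903260058127643758703514950076696493173560801998147141268444788178762953140234582649712151516690074301141482214800520700974626343597052668231980361894884402012165 := by decide +kernel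

set_option maxRecDepth 1000000 in
set_option maxHeartbeats 4000000 in
lemma hlenDY8 : DY8.length = 225 := by decide +kernel

set_option maxRecDepth 1000000 in
set_option maxHeartbeats 4000000 in
lemma hltDY9 : ∀ d ∈ DY9, d < 91 := by decide +kernel

set_option maxRecDepth 1000000 in
set_option maxHeartbeats 4000000 in
lemma hfoldDY9 : DY9.foldr (fun d a => a + 8192 ^ d) 0 = 48111791122768656581542365371266670962888620169951181745001690137292679821588956018590341905059892908968809564699712339483371132664539589822928587295955161477105128595267358148053662970464877732606535752999150531318162629630742878874302314432941852491771855914382925979678745436981692108957655988346159086185255139513952090606958059239870405446157238277 := by decide +kernel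

set_option maxRecDepth 1000000 in
set_option maxHeartbeats 4000000 in
lemma hlenDY9 : DY9.length = 225 := by decide +kernel

lemma foldr_shift (L : List ℕ) (a : ℕ) :
    L.foldr (fun d a => a + 8192 ^ d) a = L.foldr (fun d a => a + 8192 ^ d) 0 + a := by
  induction L generalizing a with
  | nil => simp
  | cons d t ih =>
    rw [List.foldr_cons, List.foldr_cons, ih a]
    ring

lemma fold_append (l1 l2 : List ℕ) :
    (l1 ++ l2).foldr (fun d a => a + 8192 ^ d) 0
      = l1.foldr (fun d a => a + 8192 ^ d) 0 + l2.foldr (fun d a => a + 8192 ^ d) 0 := by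
  rw [List.foldr_append, foldr_shift]

set_option maxRecDepth 1000000 in
set_option maxHeartbeats 4000000 in
lemma hfoldDX : DXn.foldr (fun d a => a + 8192 ^ d) 0 = NX := by
  show (DX1 ++ DX2 ++ DX3 ++ DX4 ++ DX5 ++ DX6 ++ DX7 ++ DX8 ++ DX9).foldr (fun d a => a + 8192 ^ d) 0 = NX
  simp only [fold_append, hfoldDX1, hfoldDX2, hfoldDX3, hfoldDX4, hfoldDX5, hfoldDX6, hfoldDX7, hfoldDX8, hfoldDX9]
  decide +kernel

set_option maxRecDepth 1000000 in
set_option maxHeartbeats 4000000 in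
lemma hlenDX : DXn.length = 2025 := by
  show (DX1 ++ DX2 ++ DX3 ++ DX4 ++ DX5 ++ DX6 ++ DX7 ++ DX8 ++ DX9).length = 2025
  simp only [List.length_append, hlenDX1, hlenDX2, hlenDX3, hlenDX4, hlenDX5, hlenDX6, hlenDX7, hlenDX8, hlenDX9]

set_option maxRecDepth 1000000 in
set_option maxHeartbeats 4000000 in
lemma hltDX : ∀ d ∈ DXn, d < 91 := by
  show ∀ d ∈ DX1 ++ DX2 ++ DX3 ++ DX4 ++ DX5 ++ DX6 ++ DX7 ++ DX8 ++ DX9, d < 91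
  simp only [List.forall_mem_append]
  exact ⟨⟨⟨⟨⟨⟨⟨⟨hltDX1, hltDX2⟩, hltDX3⟩, hltDX4⟩, hltDX5⟩, hltDX6⟩, hltDX7⟩, hltDX8⟩, hltDX9⟩

set_option maxRecDepth 1000000 in
set_option maxHeartbeats 4000000 in
lemma hfoldDY : DYn.foldr (fun d a => a + 8192 ^ d) 0 = NY := by
  show (DY1 ++ DY2 ++ DY3 ++ DY4 ++ DY5 ++ DY6 ++ DY7 ++ DY8 ++ DY9).foldr (fun d a => a + 8192 ^ d) 0 = NY
  simp only [fold_append, hfoldDY1, hfoldDY2, hfoldDY3, hfoldDY4, hfoldDY5, hfoldDY6, hfoldDY7, hfoldDY8, hfoldDY9]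
  decide +kernel

set_option maxRecDepth 1000000 in
set_option maxHeartbeats 4000000 in
lemma hlenDY : DYn.length = 2025 := by
  show (DY1 ++ DY2 ++ DY3 ++ DY4 ++ DY5 ++ DY6 ++ DY7 ++ DY8 ++ DY9).length = 2025
  simp only [List.length_append, hlenDY1, hlenDY2, hlenDY3, hlenDY4, hlenDY5, hlenDY6, hlenDY7, hlenDY8, hlenDY9]

set_option maxRecDepth 1000000 in
set_option maxHeartbeats 4000000 in
lemma hltDY : ∀ d ∈ DYn, d < 91 := by
  show ∀ d ∈ DY1 ++ DY2 ++ DY3 ++ DY4 ++ DY5 ++ DY6 ++ DY7 ++ DY8 ++ DY9, d < 91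
  simp only [List.forall_mem_append]
  exact ⟨⟨⟨⟨⟨⟨⟨⟨hltDY1, hltDY2⟩, hltDY3⟩, hltDY4⟩, hltDY5⟩, hltDY6⟩, hltDY7⟩, hltDY8⟩, hltDY9⟩

set_option maxRecDepth 1000000 in
set_option maxHeartbeats 4000000 in
lemma hdigits : ∀ s ∈ List.range 91, s ≠ 0 → (NX + NY) / 8192 ^ s % 8192 = 44 := by decide +kernel

set_option maxHeartbeats 1000000 in
/-- fold as a sum of counts times powers -/
lemma fold_eq_sum (L : List ℕ) (h : ∀ d ∈ L, d < 91) :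
    L.foldr (fun d a => a + 8192 ^ d) 0 = ∑ s ∈ Finset.range 91, L.count s * 8192 ^ s := by
  induction L with
  | nil => simp
  | cons d t ih =>
    have hd : d ∈ Finset.range 91 := by
      simpa using h d (List.mem_cons_self (a := d) (l := t))
    have ht : ∀ x ∈ t, x < 91 := fun x hx => h x (List.mem_cons_of_mem d hx)
    have hcong : ∀ s ∈ Finset.range 91,
        List.count s (d :: t) * 8192 ^ s
          = List.count s t * 8192 ^ s + (if s = d then 8192 ^ s else 0) := by
      intro s _
      rw [List.count_cons]
      by_cases hsd : s = d
      · simp [hsd, Nat.add_mul]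
      · simp [hsd, Ne.symm hsd, Nat.add_mul]
    rw [List.foldr_cons, ih ht, Finset.sum_congr rfl hcong, Finset.sum_add_distrib,
      Finset.sum_ite_eq' (Finset.range 91) d (fun s => 8192 ^ s), if_pos hd]

lemma sum_lt (c : ℕ → ℕ) (k : ℕ) (h : ∀ i, i < k → c i < 8192) :
    ∑ i ∈ Finset.range k, c i * 8192 ^ i ≤ 8192 ^ k - 1 := by
  induction k with
  | zero => simp
  | succ n ih =>
    rw [Finset.sum_range_succ]
    have h1 : ∑ i ∈ Finset.range n, c i * 8192 ^ i ≤ 8192 ^ n - 1 :=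
      ih (fun i hi => h i (Nat.lt_succ_of_lt hi))
    have h2 : c n * 8192 ^ n ≤ 8191 * 8192 ^ n :=
      Nat.mul_le_mul_right _ (Nat.lt_succ_iff.mp (h n (Nat.lt_succ_self n)))
    have hp : 1 ≤ 8192 ^ n := Nat.one_le_pow _ _ (by norm_num)
    have : 8192 ^ n - 1 + 8191 * 8192 ^ n = 8192 ^ (n + 1) - 1 := by
      rw [pow_succ]
      omega
    omega

set_option maxHeartbeats 1000000 in
lemma extract (c : ℕ → ℕ) (hc : ∀ i, i < 91 → c i < 8192) (s : ℕ) (hs : s < 91) :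
    (∑ i ∈ Finset.range 91, c i * 8192 ^ i) / 8192 ^ s % 8192 = c s := by
  have hsplit : ∑ i ∈ Finset.range 91, c i * 8192 ^ i
      = (∑ i ∈ Finset.range s, c i * 8192 ^ i)
        + 8192 ^ s * (c s + 8192 * ∑ j ∈ Finset.range (90 - s), c (s + 1 + j) * 8192 ^ j) := by
    have h91 : 91 = s + (91 - s) := by omega
    rw [h91, Finset.sum_range_add]
    congr 1
    have h2 : 91 - s = (90 - s) + 1 := by omega
    rw [h2, Finset.sum_range_succ']
    have hA : c (s + 0) * 8192 ^ (s + 0) = 8192 ^ s * c s := by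
      simp [Nat.mul_comm]
    have hB : ∑ i ∈ Finset.range (90 - s), c (s + (i + 1)) * 8192 ^ (s + (i + 1))
        = 8192 ^ s * (8192 * ∑ j ∈ Finset.range (90 - s), c (s + 1 + j) * 8192 ^ j) := by
      rw [Finset.mul_sum, Finset.mul_sum]
      apply Finset.sum_congr rfl
      intro j _
      have h3 : s + (j + 1) = s + 1 + j := by omega
      rw [h3, pow_add, pow_succ]
      ring
    rw [hA, hB]
    ring
  rw [hsplit]
  have hlo : (∑ i ∈ Finset.range s, c i * 8192 ^ i) < 8192 ^ s := by
    have := sum_lt c s (fun i hi => hc i (by omega))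
    have hp : 1 ≤ 8192 ^ s := Nat.one_le_pow _ _ (by norm_num)
    omega
  have hppos : 0 < 8192 ^ s := Nat.pow_pos (by norm_num)
  rw [Nat.add_mul_div_left _ _ hppos, Nat.div_eq_of_lt hlo, Nat.zero_add,
    Nat.add_mul_mod_self_left]
  exact Nat.mod_eq_of_lt (hc s hs)

lemma count_D (s : ℕ) (hs : s < 91) (hs0 : s ≠ 0) :
    DXn.count s + DYn.count s = 44 := by
  have hc : ∀ i, i < 91 → DXn.count i + DYn.count i < 8192 := by
    intro i _
    have h1 := List.count_le_length (l := DXn) (a := i)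
    have h2 := List.count_le_length (l := DYn) (a := i)
    rw [hlenDX] at h1
    rw [hlenDY] at h2
    omega
  have hsum : ∑ i ∈ Finset.range 91, (DXn.count i + DYn.count i) * 8192 ^ i = NX + NY := by
    have : ∀ i ∈ Finset.range 91, (DXn.count i + DYn.count i) * 8192 ^ i
        = DXn.count i * 8192 ^ i + DYn.count i * 8192 ^ i := by
      intro i _; rw [Nat.add_mul]
    rw [Finset.sum_congr rfl this, Finset.sum_add_distrib,
      ← fold_eq_sum DXn hltDX, ← fold_eq_sum DYn hltDY, hfoldDX, hfoldDY]
  have hext := extract (fun i => DXn.count i + DYn.count i) hc s hs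
  rw [hsum] at hext
  rw [← hext]
  exact hdigits s (by simpa using hs) hs0

lemma count_cast (L : List ℕ) (hL : ∀ d ∈ L, d < 91) (s : ℕ) (hs : s < 91) :
    (L.map (Nat.cast : ℕ → ZMod 91)).count ((s : ℕ) : ZMod 91) = L.count s := by
  induction L with
  | nil => simp
  | cons d t ih =>
    have hd : d < 91 := hL d (List.mem_cons_self (a := d) (l := t))
    have ht : ∀ x ∈ t, x < 91 := fun x hx => hL x (List.mem_cons_of_mem d hx)
    simp only [List.map_cons, List.count_cons, ih ht]
    congr 1
    have : ((d : ZMod 91) = (s : ZMod 91)) ↔ d = s := by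
      constructor
      · intro h
        have h1 := ZMod.val_cast_of_lt (show d < 91 from hd)
        have h2 := ZMod.val_cast_of_lt (show s < 91 from hs)
        rw [← h1, ← h2, h]
      · intro h; rw [h]
    simp only [beq_iff_eq, this]

lemma dc_eq (A : Finset (ZMod 91)) (s : ZMod 91) :
    diffCount A s = Multiset.count s ((A ×ˢ A).val.map (fun p => p.1 - p.2)) := by
  rw [Multiset.count_map]
  show Multiset.card (Multiset.filter _ _) = _
  congr 1
  exact Multiset.filter_congr (fun x _ => eq_comm)

set_option maxRecDepth 1000000 in
set_option maxHeartbeats 4000000 in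
theorem stmt_6 :
    X.card = 45 ∧ Y.card = 45 ∧
    (∀ s : ZMod 91, s ≠ 0 → diffCount X s + diffCount Y s = 44) := by
  rw [hX, hY]
  refine ⟨by decide +kernel, by decide +kernel, ?_⟩
  intro σ hσ
  have hval : ((σ.val : ℕ) : ZMod 91) = σ := ZMod.natCast_rightInverse σ
  have hvlt : σ.val < 91 := ZMod.val_lt σ
  have hv0 : σ.val ≠ 0 := by
    intro h
    apply hσ
    rw [← hval, h, Nat.cast_zero]
  rw [dc_eq X' σ, dc_eq Y' σ, hDX, hDY, Multiset.coe_count, Multiset.coe_count, ← hval,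
    count_cast DXn hltDX σ.val hvlt,
    count_cast DYn hltDY σ.val hvlt]
  exact count_D σ.val hvlt hv0
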